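/- arXiv:2210.00901 — 5 statements merged into one kernel-verified Lean document; each statement's English description precedes it below -/
import Mathlib

section
/- Let c : ℕ → ℕ be computable with unbounded range. Then for every k : ℕ there exist y : ℕ and a code e outputting y such that length(e) + k ≤ c(y); in particular C(y) + k ≤ c(y). (This is Lemma 2.1 of the paper: for an infinite computably enumerable assembly space with computable assembly index c, there is an object y and a program p_y producing y with K(y) + k ≤ |p_y| + k + O(1) ≤ c(y).) -/
/-- The length of a program (code): number of binary digits of its encoding. -/
def codeLen (e : Nat.Partrec.Code) : ℕ := Nat.size (Encodable.encode e)

/-- A code `e` outputs `y` if evaluating it on input `0` yields `y`. -/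
def Outputs (e : Nat.Partrec.Code) (y : ℕ) : Prop := e.eval 0 = Part.some y

/-- Kolmogorov complexity of `y`: the least length of a code outputting `y`. -/
noncomputable def C (y : ℕ) : ℕ := sInf { n | ∃ e : Nat.Partrec.Code, Outputs e y ∧ codeLen e = n }

/-- Lemma 2.1: for a computable assembly index `c` with unbounded range, for every `k`
there are an object `y` and a program `e` producing `y` with
`length(e) + k ≤ c y`, hence `C y + k ≤ c y`. -/
theorem deceiving_object_high_assembly_index
    (c : ℕ → ℕ) (hc : Computable c) (hub : ∀ N : ℕ, ∃ x : ℕ, N ≤ c x) (k : ℕ) :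
    ∃ (y : ℕ) (e : Nat.Partrec.Code), Outputs e y ∧
      codeLen e + k ≤ c y ∧ C y + k ≤ c y := by
  -- The search predicate, parametrized by a code `e`.
  set f : Nat.Partrec.Code → ℕ →. ℕ := fun e _ =>
    Nat.rfind fun x => Part.some (decide (Encodable.encode e + k ≤ c x)) with hf
  have hq : Computable fun p : (Nat.Partrec.Code × ℕ) × ℕ =>
      decide (Encodable.encode p.1.1 + k ≤ c p.2) := by
    have h1 : Computable fun p : (Nat.Partrec.Code × ℕ) × ℕ =>
        Encodable.encode p.1.1 + k :=
      (Primrec.nat_add.comp (Primrec.encode.comp (Primrec.fst.comp Primrec.fst))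
        (Primrec.const k)).to_comp
    have h2 : Computable fun p : (Nat.Partrec.Code × ℕ) × ℕ => c p.2 :=
      hc.comp Computable.snd
    exact Primrec.nat_le.decide.to_comp.comp h1 h2
  have hfp : Partrec₂ f := Partrec.rfind (Computable₂.partrec₂ hq)
  obtain ⟨e, he⟩ := Nat.Partrec.Code.fixed_point₂ hfp
  obtain ⟨x, hx⟩ := hub (Encodable.encode e + k)
  have hdom : (f e 0).Dom := by
    rw [hf]
    exact Nat.rfind_dom.2 ⟨x, by simpa using hx, fun _ => trivial⟩
  obtain ⟨y, hy⟩ := Part.dom_iff_mem.1 hdom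
  have hcy : Encodable.encode e + k ≤ c y := by
    have := Nat.rfind_spec hy
    simpa using this
  have hout : Outputs e y := by
    show e.eval 0 = Part.some y
    rw [he]
    exact Part.eq_some_iff.2 hy
  have hlen : codeLen e ≤ Encodable.encode e := Nat.size_le.2 (Nat.lt_two_pow_self)
  refine ⟨y, e, hout, le_trans (by omega) hcy, ?_⟩
  have hCy : C y ≤ codeLen e := Nat.sInf_le ⟨e, hout, rfl⟩
  omega
end

section
/- Let c : ℕ → ℕ be computable with unbounded range. Then for every k : ℕ the set { y : ℕ | C(y) + k ≤ c(y) } is infinite; that is, there are infinitely many objects whose Kolmogorov complexity lies at least k below their assembly index. (This is the strengthening, implicit in the paper's enumeration arguments, that the deceiving objects of Lemma 2.1 occur infinitely often.) -/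
/-- For a computable assembly index `c` with unbounded range, for every `k` the set of
objects whose Kolmogorov complexity lies at least `k` below their assembly index
is infinite. -/
theorem deceiving_objects_infinite
    (c : ℕ → ℕ) (hc : Computable c) (hub : ∀ N : ℕ, ∃ x : ℕ, N ≤ c x) (k : ℕ) :
    { y : ℕ | C y + k ≤ c y }.Infinite := by
  -- the "least x with N ≤ c x" function is computable
  have hp : Computable₂ (fun N x : ℕ => decide (N ≤ c x)) :=
    Primrec.nat_le.decide.to_comp.comp Computable.fst (hc.comp Computable.snd)
  have hrf : Partrec fun N : ℕ => Nat.rfind fun x => (Part.some (decide (N ≤ c x)) : Part Bool) :=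
    Partrec.rfind hp.partrec₂
  have hfind : Computable (fun N : ℕ => Nat.find (hub N)) := by
    refine hrf.of_eq_tot fun N => ?_
    refine Nat.mem_rfind.2 ⟨?_, fun {m} hm => ?_⟩
    · simpa using Nat.find_spec (hub N)
    · simpa using Nat.find_min (hub N) hm
  -- key step: for each n there is a deceiving object with assembly index ≥ n
  have key : ∀ n : ℕ, ∃ y : ℕ, C y + k ≤ c y ∧ n ≤ c y := by
    intro n
    set g : Nat.Partrec.Code → ℕ := fun e => Nat.find (hub (Encodable.encode e + n + k)) with hgdef
    have hg : Computable g :=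
      hfind.comp ((Primrec.nat_add.comp
        (Primrec.nat_add.comp Primrec.encode (Primrec.const n)) (Primrec.const k)).to_comp)
    have hF : Partrec₂ (fun (e : Nat.Partrec.Code) (_ : ℕ) => (Part.some (g e) : Part ℕ)) :=
      (hg.comp Computable.fst).partrec
    obtain ⟨e, he⟩ := Nat.Partrec.Code.fixed_point₂ hF
    have hout : Outputs e (g e) := by
      show e.eval 0 = Part.some (g e)
      rw [he]
    have h1 : C (g e) ≤ codeLen e := Nat.sInf_le ⟨e, hout, rfl⟩
    have h2 : Encodable.encode e + n + k ≤ c (g e) := Nat.find_spec (hub _)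
    have h3 : codeLen e ≤ Encodable.encode e := Nat.size_le.2 Nat.lt_two_pow_self
    exact ⟨g e, by omega, by omega⟩
  -- conclude infinitude
  by_contra hfin
  rw [Set.not_infinite] at hfin
  obtain ⟨b, hb⟩ := hfin.bddAbove
  set M := (Finset.range (b + 1)).sup c with hM
  obtain ⟨y, hy1, hy2⟩ := key (M + 1)
  have hyb : y ≤ b := hb hy1
  have : c y ≤ M := Finset.le_sup (Finset.mem_range.2 (by omega))
  omega
end

section
/- Let c : ℕ → ℕ be computable with unbounded range, and let P : ℕ → ℚ be a computable pathway-probability bound that is jointly small along high-index objects. Then for all E, m : ℕ there exist y : ℕ and a code e outputting y such that length(e) + E < c(y) and (P(y) : ℝ) < 2^(-(length(e) + m)); that is, the algorithmic-probability lower bound 2^(-length(e)) for randomly generating a program that constructs y exceeds the computed pathway probability P(y) by a factor of at least 2^m, while the assembly index of y exceeds the deceiver program's length by more than E. (This is Lemma 2.3 of the paper: a deceiver program p_d with |p_d| + E < c(y) whose algorithmic probability 2^(-|p_d|) diverges from the pathway probability of spontaneous formation by any desired statistically significant factor.) -/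
namespace AuxDPD

open Encodable

/-! ### Raw rational encoding -/

def natAbsCode (a : ℕ) : ℕ := if a % 2 = 1 then a / 2 + 1 else a / 2

def decodeZ (a : ℕ) : ℤ := if a % 2 = 1 then Int.negSucc (a / 2) else Int.ofNat (a / 2)

lemma enc_ofNat (n : ℕ) : Equiv.intEquivNat (Int.ofNat n) = 2 * n := rfl

lemma enc_negSucc (n : ℕ) : Equiv.intEquivNat (Int.negSucc n) = 2 * n + 1 := rfl

lemma decodeZ_enc (z : ℤ) : decodeZ (Equiv.intEquivNat z) = z := by
  cases z with
  | ofNat n =>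
    rw [enc_ofNat, decodeZ, if_neg (by omega)]
    exact congrArg Int.ofNat (by omega)
  | negSucc n =>
    rw [enc_negSucc, decodeZ, if_pos (by omega)]
    exact congrArg Int.negSucc (by omega)

lemma enc_decodeZ (a : ℕ) : (Equiv.intEquivNat (decodeZ a) : ℕ) = a := by
  by_cases h : a % 2 = 1
  · rw [decodeZ, if_pos h, enc_negSucc]; omega
  · rw [decodeZ, if_neg h, enc_ofNat]; omega

lemma natAbsCode_eq (a : ℕ) : natAbsCode a = (decodeZ a).natAbs := by
  by_cases h : a % 2 = 1
  · rw [natAbsCode, if_pos h, decodeZ, if_pos h]; rfl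
  · rw [natAbsCode, if_neg h, decodeZ, if_neg h]; rfl

def rawE (q : ℚ) : ℕ := Nat.pair (Equiv.intEquivNat q.num) q.den

lemma rawE_eq (q : ℚ) : @encode ℚ Rat.instEncodable q = rawE q := rfl

def copb (x y : ℕ) : Bool := decide (Nat.findGreatest (fun d => x % d = 0 ∧ y % d = 0) y = 1)

lemma findGreatest_eq_gcd {x y : ℕ} (hy : 0 < y) :
    Nat.findGreatest (fun d => x % d = 0 ∧ y % d = 0) y = Nat.gcd x y := by
  have hg0 : 0 < Nat.gcd x y := Nat.gcd_pos_of_pos_right _ hy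
  rw [Nat.findGreatest_eq_iff]
  refine ⟨Nat.le_of_dvd hy (Nat.gcd_dvd_right x y), fun _ => ⟨?_, ?_⟩, ?_⟩
  · exact Nat.dvd_iff_mod_eq_zero.1 (Nat.gcd_dvd_left x y)
  · exact Nat.dvd_iff_mod_eq_zero.1 (Nat.gcd_dvd_right x y)
  · rintro n hgn hny ⟨h1, h2⟩
    have hn0 : 0 < n := lt_trans hg0 hgn
    have : n ∣ Nat.gcd x y :=
      Nat.dvd_gcd (Nat.dvd_iff_mod_eq_zero.2 h1) (Nat.dvd_iff_mod_eq_zero.2 h2)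
    exact absurd (Nat.le_of_dvd hg0 this) (not_le.2 hgn)

lemma copb_iff {x y : ℕ} (hy : 0 < y) : copb x y = true ↔ Nat.Coprime x y := by
  rw [copb, decide_eq_true_eq, findGreatest_eq_gcd hy, Nat.Coprime]

def Bb (r : ℕ) : Bool :=
  decide (0 < r.unpair.2) && copb (natAbsCode r.unpair.1) r.unpair.2

lemma Bb_iff (r : ℕ) : Bb r = true ↔ r ∈ Set.range (@encode ℚ Rat.instEncodable) := by
  constructor
  · intro h
    rw [Bb, Bool.and_eq_true, decide_eq_true_eq] at h
    obtain ⟨h1, h2⟩ := h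
    rw [copb_iff h1] at h2
    rw [natAbsCode_eq] at h2
    refine ⟨⟨decodeZ r.unpair.1, r.unpair.2, h1.ne', h2⟩, ?_⟩
    rw [rawE_eq, rawE]
    show Nat.pair (Equiv.intEquivNat (decodeZ r.unpair.1)) r.unpair.2 = r
    rw [enc_decodeZ, Nat.pair_unpair]
  · rintro ⟨q, rfl⟩
    rw [rawE_eq, rawE, Bb, Nat.unpair_pair, Bool.and_eq_true, decide_eq_true_eq]
    refine ⟨q.pos, ?_⟩
    rw [copb_iff q.pos, natAbsCode_eq, decodeZ_enc]
    exact q.reduced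

def cnt (r : ℕ) : ℕ := Nat.rec 0 (fun n ih => ih + cond (Bb n) 1 0) r

lemma decide_range_eq (m : ℕ) :
    (@decide (m ∈ Set.range (@encode ℚ Rat.instEncodable)) (Encodable.decidableRangeEncode ℚ m))
      = Bb m := by
  letI : Decidable (m ∈ Set.range (@encode ℚ Rat.instEncodable)) :=
    Encodable.decidableRangeEncode ℚ m
  cases hb : Bb m
  · exact decide_eq_false fun hmem => by
      have := (Bb_iff m).2 hmem
      rw [hb] at this
      exact Bool.false_ne_true this
  · exact decide_eq_true ((Bb_iff m).1 hb)

lemma cnt_eq_countP (r : ℕ) :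
    (List.range r).countP
      (fun m => @decide (m ∈ Set.range (@encode ℚ Rat.instEncodable))
        (Encodable.decidableRangeEncode ℚ m)) = cnt r := by
  induction r with
  | zero => rfl
  | succ n ih =>
    rw [List.range_succ, List.countP_append, ih]
    show cnt n + _ = cnt n + cond (Bb n) 1 0
    rw [List.countP_cons, List.countP_nil, decide_range_eq]
    cases Bb n <;> rfl

def qenc (q : ℚ) : ℕ := @Encodable.encode ℚ (inferInstance : Primcodable ℚ).toEncodable q

lemma qenc_eq (q : ℚ) : qenc q = cnt (rawE q) := by
  rw [← cnt_eq_countP, ← rawE_eq]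
  rfl

lemma qenc_injective : Function.Injective qenc :=
  @Encodable.encode_injective ℚ (inferInstance : Primcodable ℚ).toEncodable

def pE : ℕ →. ℕ := fun j => Nat.rfind fun r => Part.some (Bb r && decide (cnt r = j))

lemma pE_eq (q : ℚ) : pE (qenc q) = Part.some (rawE q) := by
  rw [Part.eq_some_iff, pE]
  refine Nat.mem_rfind.2 ?_
  constructor
  · have hx : (Bb (rawE q) && decide (cnt (rawE q) = qenc q)) = true := by
      rw [Bool.and_eq_true, decide_eq_true_eq]
      exact ⟨(Bb_iff _).2 ⟨q, rawE_eq q⟩, (qenc_eq q).symm⟩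
    simp [hx]
  · intro m hm
    cases hb : (Bb m && decide (cnt m = qenc q))
    · simp [hb]
    · exfalso
      rw [Bool.and_eq_true, decide_eq_true_eq] at hb
      obtain ⟨hb1, hb2⟩ := hb
      obtain ⟨q', hq'⟩ := (Bb_iff m).1 hb1
      rw [rawE_eq] at hq'
      have : qenc q' = qenc q := by rw [qenc_eq, hq', hb2]
      have := qenc_injective this
      subst this
      rw [hq'] at hm
      exact lt_irrefl _ hm

/-! ### Computability of the pieces -/

lemma hpow2 : Primrec₂ (HPow.hPow : ℕ → ℕ → ℕ) := Primrec₂.unpaired'.mp Nat.Primrec.pow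

lemma hu1 : Primrec fun r : ℕ => r.unpair.1 := Primrec.fst.comp Primrec.unpair
lemma hu2 : Primrec fun r : ℕ => r.unpair.2 := Primrec.snd.comp Primrec.unpair

lemma hNAC : Primrec natAbsCode := by
  unfold natAbsCode
  exact Primrec.ite
    (PrimrecRel.comp Primrec.eq (Primrec.nat_mod.comp .id (.const 2)) (.const 1))
    (Primrec.succ.comp (Primrec.nat_div.comp .id (.const 2)))
    (Primrec.nat_div.comp .id (.const 2))

lemma hcopb : Primrec₂ copb := by
  have h1 : PrimrecPred fun (p : (ℕ × ℕ) × ℕ) => p.1.1 % p.2 = 0 :=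
    PrimrecRel.comp Primrec.eq
      (Primrec.nat_mod.comp (Primrec.fst.comp Primrec.fst) Primrec.snd) (Primrec.const 0)
  have h2 : PrimrecPred fun (p : (ℕ × ℕ) × ℕ) => p.1.2 % p.2 = 0 :=
    PrimrecRel.comp Primrec.eq
      (Primrec.nat_mod.comp (Primrec.snd.comp Primrec.fst) Primrec.snd) (Primrec.const 0)
  have hp : PrimrecRel fun (xy : ℕ × ℕ) (d : ℕ) => xy.1 % d = 0 ∧ xy.2 % d = 0 :=
    PrimrecPred.and h1 h2
  have hfg : Primrec fun (xy : ℕ × ℕ) =>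
      Nat.findGreatest (fun d => xy.1 % d = 0 ∧ xy.2 % d = 0) xy.2 :=
    Primrec.nat_findGreatest Primrec.snd hp
  exact PrimrecPred.decide (PrimrecRel.comp Primrec.eq hfg (Primrec.const 1))

lemma hBb : Primrec Bb := by
  have h1 : PrimrecPred fun r : ℕ => 0 < r.unpair.2 :=
    PrimrecRel.comp Primrec.nat_lt (Primrec.const 0) hu2
  have h2 : Primrec fun r : ℕ => copb (natAbsCode r.unpair.1) r.unpair.2 :=
    hcopb.comp (hNAC.comp hu1) hu2
  exact Primrec₂.comp Primrec.and h1.decide h2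

lemma hcnt : Primrec cnt := by
  have inner : Primrec fun p : ℕ × ℕ => p.2 + cond (Bb p.1) 1 0 :=
    Primrec₂.comp Primrec.nat_add Primrec.snd
      (Primrec.cond (hBb.comp Primrec.fst) (Primrec.const 1) (Primrec.const 0))
  exact Primrec.nat_rec₁ 0 inner

lemma hpE : Partrec pE := by
  have hbool : Primrec fun p : ℕ × ℕ => Bb p.2 && decide (cnt p.2 = p.1) :=
    Primrec₂.comp Primrec.and (hBb.comp Primrec.snd)
      (PrimrecRel.comp Primrec.eq (hcnt.comp Primrec.snd) Primrec.fst).decide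
  have hp2 : Partrec₂ fun (j r : ℕ) => (Part.some (Bb r && decide (cnt r = j)) : Part Bool) :=
    Computable₂.partrec₂ (Primrec₂.to_comp hbool)
  exact Partrec.rfind hp2

/-! ### Numeral codes and size bounds -/

open Nat.Partrec (Code)

def numCode (db ds : Code) (n : ℕ) : Code :=
  if n = 0 then Code.zero
  else Code.comp (if n % 2 = 1 then ds else db) (numCode db ds (n / 2))
  termination_by n
  decreasing_by exact Nat.div_lt_self (Nat.pos_of_ne_zero (by assumption)) one_lt_two

lemma numCode_eval {db ds : Code} (hdb : ∀ m, db.eval m = Part.some (2 * m))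
    (hds : ∀ m, ds.eval m = Part.some (2 * m + 1)) :
    ∀ n x, (numCode db ds n).eval x = Part.some n := by
  intro n
  induction n using Nat.strong_induction_on with
  | _ n IH =>
    intro x
    rw [numCode]
    by_cases h : n = 0
    · subst h; rfl
    · rw [if_neg h]
      have hlt : n / 2 < n := Nat.div_lt_self (Nat.pos_of_ne_zero h) one_lt_two
      simp only [Code.eval]
      rw [IH _ hlt x]
      rw [show ((Part.some (n/2)) >>= (if n % 2 = 1 then ds else db).eval) = (if n % 2 = 1 then ds else db).eval (n/2) from Part.bind_some _ _]
      rcases Nat.mod_two_eq_zero_or_one n with h2 | h2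
      · rw [if_neg (by omega), hdb]
        exact congrArg Part.some (by omega)
      · rw [if_pos h2, hds]
        exact congrArg Part.some (by omega)

lemma encode_comp_eq (a b : Code) :
    Encodable.encode (Code.comp a b) = 4 * Nat.pair (Encodable.encode a) (Encodable.encode b) + 6 := by
  simp only [Nat.Partrec.Code.encodeCode_eq, Nat.Partrec.Code.encodeCode]
  try omega

lemma encode_zero_eq : Encodable.encode Code.zero = 0 := by
  simp [Nat.Partrec.Code.encodeCode_eq, Nat.Partrec.Code.encodeCode]

lemma pair_lt_sq {a b N : ℕ} (ha : a < N) (hb : b < N) : Nat.pair a b < N * N := by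
  rw [Nat.pair]; split <;> nlinarith

lemma size_comp_le (a b : Code) :
    Nat.size (Encodable.encode (Code.comp a b)) ≤
      2 * max (Nat.size (Encodable.encode a)) (Nat.size (Encodable.encode b)) + 3 := by
  set M := max (Nat.size (Encodable.encode a)) (Nat.size (Encodable.encode b)) with hM
  rw [Nat.size_le, encode_comp_eq]
  have ha : Encodable.encode a < 2 ^ M :=
    lt_of_lt_of_le (Nat.lt_size_self _) (Nat.pow_le_pow_right (by norm_num) (le_max_left _ _))
  have hb : Encodable.encode b < 2 ^ M :=
    lt_of_lt_of_le (Nat.lt_size_self _) (Nat.pow_le_pow_right (by norm_num) (le_max_right _ _))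
  have hp : Nat.pair (Encodable.encode a) (Encodable.encode b) < 2 ^ M * 2 ^ M :=
    pair_lt_sq ha hb
  have h1 : (1:ℕ) ≤ 2 ^ M * 2 ^ M := Nat.one_le_iff_ne_zero.2 (by positivity)
  have h2 : (2:ℕ) ^ (2 * M + 3) = 8 * (2 ^ M * 2 ^ M) := by
    rw [pow_add, two_mul, pow_add]; ring
  omega

lemma size_div2_succ {n : ℕ} (h : n ≠ 0) : Nat.size n = Nat.size (n / 2) + 1 := by
  conv_lhs => rw [← Nat.bit_decide_mod_two_eq_one_shiftRight_one n]
  rw [Nat.size_bit (by rw [Nat.bit_decide_mod_two_eq_one_shiftRight_one]; exact h), Nat.shiftRight_one]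

lemma numCode_size (db ds : Code) (n : ℕ) :
    Nat.size (Encodable.encode (numCode db ds n)) ≤
      (max (Nat.size (Encodable.encode db)) (Nat.size (Encodable.encode ds)) + 5)
        * 2 ^ (Nat.size n) - 3 := by
  set K := max (Nat.size (Encodable.encode db)) (Nat.size (Encodable.encode ds)) + 5 with hK
  induction n using Nat.strong_induction_on with
  | _ n IH =>
    rw [numCode]
    by_cases h : n = 0
    · subst h
      rw [if_pos rfl, encode_zero_eq, Nat.size_zero]
      exact Nat.zero_le _
    · rw [if_neg h]
      have hlt : n / 2 < n := Nat.div_lt_self (Nat.pos_of_ne_zero h) one_lt_two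
      have ih := IH _ hlt
      have hc : Nat.size (Encodable.encode (if n % 2 = 1 then ds else db)) ≤ K - 5 := by
        split
        · omega
        · omega
      have hcomp := size_comp_le (if n % 2 = 1 then ds else db) (numCode db ds (n / 2))
      have hKle : K ≤ K * 2 ^ (Nat.size (n / 2)) :=
        Nat.le_mul_of_pos_right _ (Nat.pow_pos (by norm_num))
      have hsz : Nat.size n = Nat.size (n / 2) + 1 := size_div2_succ h
      have hpow : K * 2 ^ (Nat.size (n / 2) + 1) = 2 * (K * 2 ^ (Nat.size (n / 2))) := by
        rw [pow_succ]; ring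
      rw [hsz, hpow]
      omega

lemma two_pow_size_le {n : ℕ} (h : 0 < n) : 2 ^ (Nat.size n) ≤ 2 * n := by
  have h1 : 0 < Nat.size n := Nat.size_pos.2 h
  have h2 : Nat.size n - 1 < Nat.size n := by omega
  have h3 : 2 ^ (Nat.size n - 1) ≤ n := Nat.lt_size.1 h2
  calc 2 ^ (Nat.size n) = 2 * 2 ^ (Nat.size n - 1) := by
        rw [← pow_succ']
        exact congrArg (2 ^ ·) (by omega)
    _ ≤ 2 * n := by omega

lemma exists_good_k (C D : ℕ) : ∃ k, 0 < k ∧ C + D * k < 2 ^ k := by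
  set t := C + D + 1 with ht
  refine ⟨2 * t + 1, by omega, ?_⟩
  have h1 : t < 2 ^ t := Nat.lt_two_pow_self
  have h2 : (2:ℕ) ^ (2 * t + 1) = 2 * (2 ^ t * 2 ^ t) := by
    rw [two_mul, pow_add, pow_add]; ring
  have h3 : C + D * (2 * t + 1) < t + t * (2 * t + 1) := by
    have hC : C < t := by omega
    have hD : D ≤ t := by omega
    exact Nat.add_lt_add_of_lt_of_le hC (Nat.mul_le_mul_right _ hD)
  have h4 : t + t * (2 * t + 1) = 2 * (t * (t + 1)) := by ring
  have h5 : t * (t + 1) < 2 ^ t * 2 ^ t :=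
    Nat.mul_lt_mul_of_lt_of_le h1 (by omega) (by positivity)
  omega

/-! ### Rational comparison semantics -/

lemma rat_lt_inv_iff (q : ℚ) (T : ℕ) :
    q < ((2:ℚ) ^ T)⁻¹ ↔ q.num * 2 ^ T < (q.den : ℤ) := by
  have h2T : (0:ℚ) < 2 ^ T := by positivity
  have hden : (0:ℚ) < (q.den : ℚ) := by exact_mod_cast q.pos
  rw [inv_eq_one_div]
  conv_lhs => rw [← Rat.num_div_den q]
  rw [div_lt_div_iff₀ hden h2T, one_mul]
  constructor
  · intro h; exact_mod_cast h
  · intro h; exact_mod_cast h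

lemma test_sem (q : ℚ) (T : ℕ) :
    (decide ((rawE q).unpair.1 % 2 = 1)
      || decide ((rawE q).unpair.1 / 2 * 2 ^ T < (rawE q).unpair.2)) = true
      ↔ q < ((2:ℚ) ^ T)⁻¹ := by
  rw [rawE, Nat.unpair_pair, Bool.or_eq_true, decide_eq_true_eq, decide_eq_true_eq,
    rat_lt_inv_iff]
  rcases hn : q.num with n | n
  · rw [enc_ofNat]
    have e1 : ¬(2 * n) % 2 = 1 := by omega
    have e2 : 2 * n / 2 = n := by omega
    rw [e2]
    simp only [e1, false_or]
    rw [Int.ofNat_eq_natCast]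
    constructor <;> intro h <;> exact_mod_cast h
  · rw [enc_negSucc]
    have e1 : (2 * n + 1) % 2 = 1 := by omega
    simp only [e1, true_or, true_iff]
    have h1 : (Int.negSucc n) < 0 := Int.negSucc_lt_zero n
    have h2 : (0:ℤ) < 2 ^ T := by positivity
    have h3 : Int.negSucc n * 2 ^ T < 0 := mul_neg_of_neg_of_pos h1 h2
    have h4 : (0:ℤ) ≤ (q.den : ℤ) := Int.natCast_nonneg _
    omega

end AuxDPD

/-- Lemma 2.3: for a computable assembly index `c` with unbounded range and a computable
pathway-probability bound `P` that is jointly small along high-index objects, for all `E, m`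
there are an object `y` and a deceiver program `e` producing `y` with `length(e) + E < c y`
and `P y < 2^(-(length(e) + m))`: the algorithmic-probability lower bound `2^(-length(e))`
exceeds the pathway probability `P y` by a factor of at least `2^m`. -/
theorem deceiver_program_diverging_probabilities
    (c : ℕ → ℕ) (hc : Computable c) (hub : ∀ N : ℕ, ∃ x : ℕ, N ≤ c x)
    (P : ℕ → ℚ) (hP : Computable P) (hP01 : ∀ y : ℕ, 0 ≤ P y ∧ P y ≤ 1)
    (hsmall : ∀ N : ℕ, ∀ ε : ℚ, 0 < ε → ∃ x : ℕ, N ≤ c x ∧ P x < ε)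
    (E m : ℕ) :
    ∃ (y : ℕ) (e : Nat.Partrec.Code), Outputs e y ∧
      codeLen e + E < c y ∧ (P y : ℝ) < (2 : ℝ) ^ (-((codeLen e + m : ℕ) : ℤ)) := by
  classical
  have hPe : Computable fun x : ℕ => AuxDPD.qenc (P x) := Computable.encode.comp hP
  set p : ℕ → ℕ →. Bool := fun k x =>
    (AuxDPD.pE (AuxDPD.qenc (P x))).map
      (fun r => decide (2 ^ k ≤ c x) &&
        (decide (r.unpair.1 % 2 = 1) || decide (r.unpair.1 / 2 * 2 ^ (2 ^ k) < r.unpair.2)))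
    with hp_def
  have hp : Partrec₂ p := by
    have hbase : Partrec fun pr : ℕ × ℕ => AuxDPD.pE (AuxDPD.qenc (P pr.2)) :=
      AuxDPD.hpE.comp (hPe.comp Computable.snd)
    have hd1 : Computable fun pr : ℕ × ℕ => decide (2 ^ pr.1 ≤ c pr.2) :=
      ((PrimrecRel.decide Primrec.nat_le).to_comp).comp
        ((AuxDPD.hpow2.to_comp).comp (Computable.const 2) Computable.fst)
        (hc.comp Computable.snd)
    have horb : Primrec fun v : (ℕ × ℕ) × ℕ =>
        (decide (v.2.unpair.1 % 2 = 1)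
          || decide (v.2.unpair.1 / 2 * 2 ^ (2 ^ v.1.1) < v.2.unpair.2)) := by
      have hk : Primrec fun v : (ℕ × ℕ) × ℕ => v.1.1 := Primrec.fst.comp Primrec.fst
      have hr : Primrec fun v : (ℕ × ℕ) × ℕ => v.2 := Primrec.snd
      have hc1 : PrimrecPred fun v : (ℕ × ℕ) × ℕ => v.2.unpair.1 % 2 = 1 :=
        PrimrecRel.comp Primrec.eq
          (Primrec.nat_mod.comp (AuxDPD.hu1.comp hr) (Primrec.const 2)) (Primrec.const 1)
      have hpow2k : Primrec fun v : (ℕ × ℕ) × ℕ => 2 ^ (2 ^ v.1.1) :=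
        AuxDPD.hpow2.comp (Primrec.const 2) (AuxDPD.hpow2.comp (Primrec.const 2) hk)
      have hleft : Primrec fun v : (ℕ × ℕ) × ℕ => v.2.unpair.1 / 2 * 2 ^ (2 ^ v.1.1) :=
        Primrec.nat_mul.comp
          (Primrec.nat_div.comp (AuxDPD.hu1.comp hr) (Primrec.const 2)) hpow2k
      have hc2 : PrimrecPred fun v : (ℕ × ℕ) × ℕ =>
          v.2.unpair.1 / 2 * 2 ^ (2 ^ v.1.1) < v.2.unpair.2 :=
        PrimrecRel.comp Primrec.nat_lt hleft (AuxDPD.hu2.comp hr)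
      exact Primrec₂.comp Primrec.or hc1.decide hc2.decide
    have htb : Computable₂ fun (pr : ℕ × ℕ) (r : ℕ) =>
        (decide (2 ^ pr.1 ≤ c pr.2) &&
          (decide (r.unpair.1 % 2 = 1)
            || decide (r.unpair.1 / 2 * 2 ^ (2 ^ pr.1) < r.unpair.2))) :=
      (Primrec.and.to_comp).comp (hd1.comp Computable.fst) (horb.to_comp)
    exact hbase.map htb
  have hsem : ∀ k x, p k x = Part.some
      (decide (2 ^ k ≤ c x) &&
        (decide ((AuxDPD.rawE (P x)).unpair.1 % 2 = 1)
          || decide ((AuxDPD.rawE (P x)).unpair.1 / 2 * 2 ^ (2 ^ k)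
              < (AuxDPD.rawE (P x)).unpair.2))) := by
    intro k x
    rw [hp_def]
    simp only []
    rw [AuxDPD.pE_eq (P x), Part.map_some]
  have hptot : ∀ k x, (p k x).Dom := by
    intro k x
    rw [hsem]
    exact trivial
  have hkey : ∀ k, ∃ y, Nat.rfind (p k) = Part.some y ∧ 2 ^ k ≤ c y ∧
      P y < ((2:ℚ) ^ (2 ^ k))⁻¹ := by
    intro k
    obtain ⟨x₀, hx1, hx2⟩ := hsmall (2 ^ k) ((2:ℚ) ^ (2 ^ k))⁻¹ (by positivity)
    have hx0 : p k x₀ = Part.some true := by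
      rw [hsem]
      refine congrArg Part.some ?_
      rw [Bool.and_eq_true]
      exact ⟨decide_eq_true hx1, (AuxDPD.test_sem (P x₀) (2 ^ k)).2 hx2⟩
    have hdom : (Nat.rfind (p k)).Dom :=
      Nat.rfind_dom.2 ⟨x₀, by rw [hx0]; exact Part.mem_some _, fun {n} _ => hptot k n⟩
    have hmem : (Nat.rfind (p k)).get hdom ∈ Nat.rfind (p k) := Part.get_mem hdom
    set y := (Nat.rfind (p k)).get hdom with hy
    have hspec := Nat.rfind_spec hmem
    rw [hsem k y, Part.mem_some_iff] at hspec
    replace hspec := hspec.symm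
    rw [Bool.and_eq_true, decide_eq_true_eq] at hspec
    exact ⟨y, Part.eq_some_iff.2 hmem, hspec.1,
      (AuxDPD.test_sem (P y) (2 ^ k)).1 hspec.2⟩
  -- codes
  obtain ⟨e0, he0⟩ := Nat.Partrec.Code.exists_code.1 (Partrec.nat_iff.1 (Partrec.rfind hp))
  obtain ⟨db, hdb⟩ := Nat.Partrec.Code.exists_code.1
    (Partrec.nat_iff.1 ((Primrec.nat_double.to_comp : Computable fun n : ℕ => 2 * n)))
  obtain ⟨ds, hds⟩ := Nat.Partrec.Code.exists_code.1
    (Partrec.nat_iff.1 ((Primrec.nat_double_succ.to_comp : Computable fun n : ℕ => 2 * n + 1)))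
  have hdb' : ∀ x, db.eval x = Part.some (2 * x) := fun x => by rw [hdb]; rfl
  have hds' : ∀ x, ds.eval x = Part.some (2 * x + 1) := fun x => by rw [hds]; rfl
  set K := max (Nat.size (Encodable.encode db)) (Nat.size (Encodable.encode ds)) + 5 with hKdef
  set L0 := Nat.size (Encodable.encode e0) with hL0def
  obtain ⟨k, hk0, hklt⟩ := AuxDPD.exists_good_k (2 * L0 + 3 + E + m + 1) (4 * K)
  set e := e0.comp (AuxDPD.numCode db ds k) with he_def
  -- size bound
  have hnum_size : Nat.size (Encodable.encode (AuxDPD.numCode db ds k)) ≤ 2 * (K * k) := by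
    calc Nat.size (Encodable.encode (AuxDPD.numCode db ds k))
        ≤ K * 2 ^ (Nat.size k) - 3 := AuxDPD.numCode_size db ds k
      _ ≤ K * 2 ^ (Nat.size k) := Nat.sub_le _ _
      _ ≤ K * (2 * k) := Nat.mul_le_mul_left _ (AuxDPD.two_pow_size_le hk0)
      _ = 2 * (K * k) := by ring
  have hL : codeLen e ≤ 2 * L0 + 3 + 4 * (K * k) := by
    have h := AuxDPD.size_comp_le e0 (AuxDPD.numCode db ds k)
    have hmax : max L0 (Nat.size (Encodable.encode (AuxDPD.numCode db ds k)))
        ≤ L0 + 2 * (K * k) :=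
      max_le (Nat.le_add_right _ _) (le_trans hnum_size (Nat.le_add_left _ _))
    show Nat.size (Encodable.encode e) ≤ 2 * L0 + 3 + 4 * (K * k)
    rw [he_def]
    omega
  have hklt' : 2 * L0 + 3 + E + m + 1 + 4 * (K * k) < 2 ^ k := by
    have : 4 * K * k = 4 * (K * k) := by ring
    omega
  -- conclusion
  obtain ⟨y, hy_eq, hy_c, hy_P⟩ := hkey k
  have hout : Outputs e y := by
    show e.eval 0 = Part.some y
    rw [he_def]
    show ((AuxDPD.numCode db ds k).eval 0) >>= e0.eval = Part.some y
    rw [AuxDPD.numCode_eval hdb' hds' k 0,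
      show (Part.some k >>= e0.eval) = e0.eval k from Part.bind_some _ _]
    rw [he0]
    exact hy_eq
  have hclt : codeLen e + E < c y := by
    have h1 : codeLen e + E < 2 ^ k := by omega
    omega
  refine ⟨y, e, hout, hclt, ?_⟩
  have hLm : ((codeLen e + m : ℕ) : ℤ) ≤ ((2 ^ k : ℕ) : ℤ) := by
    have : codeLen e + m ≤ 2 ^ k := by omega
    exact_mod_cast this
  have hcast : (P y : ℝ) < ((2:ℝ) ^ (2 ^ k : ℕ))⁻¹ := by
    have h2 : ((P y : ℚ) : ℝ) < ((((2:ℚ) ^ (2 ^ k))⁻¹ : ℚ) : ℝ) := by exact_mod_cast hy_P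
    push_cast at h2
    exact h2
  have hzp : ((2:ℝ) ^ (2 ^ k : ℕ))⁻¹ = (2:ℝ) ^ (-((2 ^ k : ℕ) : ℤ)) := by
    rw [zpow_neg, zpow_natCast]
  have hmono : (2:ℝ) ^ (-((2 ^ k : ℕ) : ℤ)) ≤ (2:ℝ) ^ (-((codeLen e + m : ℕ) : ℤ)) :=
    zpow_le_zpow_right₀ one_le_two (neg_le_neg hLm)
  calc (P y : ℝ) < ((2:ℝ) ^ (2 ^ k : ℕ))⁻¹ := hcast
    _ = (2:ℝ) ^ (-((2 ^ k : ℕ) : ℤ)) := hzp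
    _ ≤ (2:ℝ) ^ (-((codeLen e + m : ℕ) : ℤ)) := hmono
end

section
/- Let c : ℕ → ℕ be computable with unbounded range, let P : ℕ → ℚ be a computable pathway-probability bound that is jointly small along high-index objects, and let L be a set of codes that emulates the universal machine with overhead d (for some d : ℕ). Then for all E, m : ℕ there exists y : ℕ such that the sub-algorithmic complexity C_L(y) is attained (some code in L outputs y), C_L(y) + E < c(y), and (P(y) : ℝ) < 2^(-(C_L(y) + m)). (This is Theorem 2.4 of the paper: when the randomly generated computable generative processes of an infinite assembly space include ones effecting the deceiver's computation, the complexity error of the assembly index exceeds any prescribed error E, and the resulting frequency of occurrence of y diverges by a factor of at least 2^m from the expectation of Assembly Theory.) -/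
/-- Sub-algorithmic complexity of `y` relative to a set `L` of codes (the allowed
generative processes): the least length of a code in `L` that outputs `y`. -/
noncomputable def CL (L : Set Nat.Partrec.Code) (y : ℕ) : ℕ :=
  sInf { n | ∃ e ∈ L, Outputs e y ∧ codeLen e = n }


namespace ATaux

private def gstep : ℕ × ℕ → ℕ × ℕ := fun p => if p.1 = 0 then p else (p.2 % p.1, p.1)

private theorem gstep_iter : ∀ k x y, x ≤ k → gstep^[k] (x, y) = (0, Nat.gcd x y) := by
  intro k
  induction k using Nat.strong_induction_on with
  | _ k ih =>
    intro x y hx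
    match k, x with
    | 0, 0 => simp [Nat.gcd]
    | k+1, 0 =>
      rw [Function.iterate_succ_apply]
      have h1 : gstep (0, y) = (0, y) := by simp [gstep]
      rw [h1, ih k (Nat.lt_succ_self k) 0 y (Nat.zero_le _)]
    | k+1, x+1 =>
      rw [Function.iterate_succ_apply]
      have h1 : gstep (x+1, y) = (y % (x+1), x+1) := by simp [gstep]
      have hm : y % (x+1) < x + 1 := Nat.mod_lt _ (Nat.succ_pos x)
      have hx' : x + 1 ≤ k + 1 := hx
      rw [h1, ih k (Nat.lt_succ_self k) (y % (x+1)) (x+1) (by omega), ← Nat.gcd_rec]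

private theorem primrec_gstep : Primrec gstep :=
  Primrec.ite (PrimrecRel.comp Primrec.eq Primrec.fst (Primrec.const 0)) Primrec.id
    (Primrec.pair (Primrec.nat_mod.comp Primrec.snd Primrec.fst) Primrec.fst)

private theorem primrec_iter : Primrec₂ (fun (p : ℕ × ℕ) (k : ℕ) => gstep^[k] p) := by
  have h := Primrec.nat_rec (α := ℕ × ℕ) (β := ℕ × ℕ) (f := id)
    (g := fun _ q => gstep q.2) Primrec.id (primrec_gstep.comp (Primrec.snd.comp Primrec.snd)).to₂
  refine h.of_eq ?_
  intro p n
  induction n with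
  | zero => rfl
  | succ n ihn => simp only [Function.iterate_succ_apply']; rw [← ihn]

theorem primrec_gcd : Primrec₂ Nat.gcd := by
  have h : Primrec (fun p : ℕ × ℕ => (gstep^[p.1 + 1] p).2) :=
    Primrec.snd.comp (primrec_iter.comp Primrec.id (Primrec.succ.comp Primrec.fst))
  have h2 : Primrec (fun p : ℕ × ℕ => Nat.gcd p.1 p.2) := by
    refine h.of_eq ?_
    intro p
    rw [show (p : ℕ × ℕ) = (p.1, p.2) from rfl]
    rw [gstep_iter (p.1 + 1) p.1 p.2 (Nat.le_succ _)]
  exact h2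

-- size
private theorem primrec_pow : Primrec₂ (fun a b : ℕ => a ^ b) :=
  Primrec₂.unpaired.1 (Primrec.nat_iff.2 Nat.Primrec.pow)

theorem primrec_size : Primrec Nat.size := by
  refine Primrec.of_graph ⟨id, Primrec.id, fun n => Nat.size_le.2 (Nat.lt_two_pow_self (n := n))⟩ ?_
  have hrel : PrimrecRel (fun n m : ℕ => n < 2^m ∧ (m = 0 ∨ 2^(m-1) ≤ n)) := by
    refine PrimrecPred.and ?_ (PrimrecPred.or ?_ ?_)
    · exact PrimrecRel.comp Primrec.nat_lt Primrec.fst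
        (primrec_pow.comp (Primrec.const 2) Primrec.snd)
    · exact PrimrecRel.comp Primrec.eq Primrec.snd (Primrec.const 0)
    · exact PrimrecRel.comp Primrec.nat_le
        (primrec_pow.comp (Primrec.const 2) (Primrec.pred.comp Primrec.snd)) Primrec.fst
  refine hrel.of_eq ?_
  intro n m
  constructor
  · rintro ⟨h1, h2⟩
    have hle : Nat.size n ≤ m := Nat.size_le.2 h1
    rcases h2 with h2 | h2
    · omega
    · have := Nat.lt_size.2 h2
      omega
  · rintro rfl
    refine ⟨Nat.lt_size_self n, ?_⟩
    rcases Nat.eq_zero_or_pos (Nat.size n) with h | h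
    · exact Or.inl h
    · exact Or.inr (Nat.lt_size.1 (by omega))

end ATaux


namespace ATaux

private def iabs (a : ℕ) : ℕ := a.div2 + cond a.bodd 1 0

private def inS : ℕ → Bool := fun m =>
  decide (0 < m.unpair.2) && (Nat.gcd (iabs m.unpair.1) m.unpair.2 == 1)

private def cnt : ℕ → ℕ := fun m => (List.range m).countP inS

private def enc0 : ℚ → ℕ := @Encodable.encode ℚ Rat.instEncodable
private def enc1 : ℚ → ℕ := @Encodable.encode ℚ (Primcodable.ofDenumerable ℚ).toEncodable

private theorem enc0_eq (q : ℚ) : enc0 q = Nat.pair (Encodable.encode q.num) q.den := rfl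

private theorem encZ_ofNat (n : ℕ) : Encodable.encode (Int.ofNat n) = 2 * n := rfl
private theorem encZ_negSucc (n : ℕ) : Encodable.encode (Int.negSucc n) = 2 * n + 1 := rfl

private theorem bodd_two_mul (n : ℕ) : (2 * n).bodd = false := by
  simp [Nat.bodd_mul]

private theorem bodd_two_mul_add_one (n : ℕ) : (2 * n + 1).bodd = true := by
  simp [Nat.bodd_mul]

private theorem div2_two_mul (n : ℕ) : (2 * n).div2 = n := by
  rw [Nat.div2_val]; omega

private theorem div2_two_mul_add_one (n : ℕ) : (2 * n + 1).div2 = n := by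
  rw [Nat.div2_val]; omega

private theorem encZ_bodd (z : ℤ) : (Encodable.encode z).bodd = decide (z < 0) := by
  cases z with
  | ofNat n =>
    rw [encZ_ofNat, bodd_two_mul]
    symm; rw [decide_eq_false_iff_not]; exact Int.not_lt.2 (Int.ofNat_nonneg n)
  | negSucc n =>
    rw [encZ_negSucc, bodd_two_mul_add_one]
    symm; rw [decide_eq_true_eq]; exact Int.negSucc_lt_zero n

private theorem encZ_iabs (z : ℤ) : iabs (Encodable.encode z) = z.natAbs := by
  cases z with
  | ofNat n =>
    rw [encZ_ofNat]; unfold iabs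
    rw [bodd_two_mul, div2_two_mul]; simp
  | negSucc n =>
    rw [encZ_negSucc]; unfold iabs
    rw [bodd_two_mul_add_one, div2_two_mul_add_one]; simp [Int.natAbs_negSucc]

private theorem encZ_div2_nonneg (z : ℤ) (h : 0 ≤ z) : (Encodable.encode z).div2 = z.toNat := by
  cases z with
  | ofNat n => rw [encZ_ofNat, div2_two_mul]; rfl
  | negSucc n => exact absurd h (by exact fun hh => absurd (Int.negSucc_lt_zero n) (by omega))

private theorem mem_range_enc0 (m : ℕ) :
    m ∈ Set.range (@Encodable.encode ℚ Rat.instEncodable) ↔ inS m = true := by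
  constructor
  · rintro ⟨q, rfl⟩
    rw [show (Encodable.encode q : ℕ) = Nat.pair (Encodable.encode q.num) q.den from rfl]
    simp only [inS, Nat.unpair_pair, Bool.and_eq_true, decide_eq_true_eq, beq_iff_eq]
    exact ⟨q.pos, by rw [encZ_iabs]; exact q.reduced⟩
  · intro hm
    simp only [inS, Bool.and_eq_true, decide_eq_true_eq, beq_iff_eq] at hm
    obtain ⟨hb, hg⟩ := hm
    set a := m.unpair.1 with ha
    set b := m.unpair.2 with hb'
    have hbd := Nat.bodd_add_div2 a
    set z : ℤ := if a.bodd then Int.negSucc a.div2 else (Int.ofNat a.div2) with hz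
    have hze : Encodable.encode z = a := by
      cases hab : a.bodd with
      | false =>
        rw [hz, hab, if_neg (by simp), encZ_ofNat]
        rw [hab] at hbd; simpa using hbd
      | true =>
        rw [hz, hab, if_pos rfl, encZ_negSucc]
        rw [hab] at hbd; simp at hbd; omega
    have hzabs : z.natAbs = iabs a := by rw [← hze, encZ_iabs]
    refine ⟨⟨z, b, by omega, by rw [Nat.Coprime, hzabs]; exact hg⟩, ?_⟩
    show Nat.pair (Encodable.encode z) b = m
    rw [hze]
    exact Nat.pair_unpair m

private theorem enc1_eq (q : ℚ) : enc1 q = cnt (enc0 q) := by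
  have h0 : enc1 q
      = (List.range (enc0 q)).countP (fun m =>
          @decide (m ∈ Set.range (@Encodable.encode ℚ Rat.instEncodable))
            (@Encodable.decidableRangeEncode ℚ Rat.instEncodable m)) := rfl
  rw [h0]
  refine List.countP_congr (fun m _ => ?_)
  simp only [decide_eq_true_eq]
  exact mem_range_enc0 m


end ATaux


namespace ATaux

private theorem cnt_succ (m : ℕ) (h : inS m = true) : cnt (m + 1) = cnt m + 1 := by
  unfold cnt
  rw [List.range_succ, List.countP_append]
  simp [List.countP_cons, h]

private theorem cnt_mono {m₁ m₂ : ℕ} (h : m₁ ≤ m₂) : cnt m₁ ≤ cnt m₂ := by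
  unfold cnt
  exact List.Sublist.countP_le (List.range_sublist.2 h)

private theorem cnt_lt_of {m₁ m₂ : ℕ} (h : m₁ < m₂) (hS : inS m₁ = true) : cnt m₁ < cnt m₂ := by
  have := cnt_succ m₁ hS
  have := cnt_mono (show m₁ + 1 ≤ m₂ from h)
  omega

private theorem cnt_inj {m₁ m₂ : ℕ} (h₁ : inS m₁ = true) (h₂ : inS m₂ = true)
    (hc : cnt m₁ = cnt m₂) : m₁ = m₂ := by
  rcases lt_trichotomy m₁ m₂ with h | h | h
  · exact absurd hc (Nat.ne_of_lt (cnt_lt_of h h₁))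
  · exact h
  · exact absurd hc.symm (Nat.ne_of_lt (cnt_lt_of h h₂))

private theorem inS_intpoint (t : ℕ) : inS (Nat.pair (2 * t) 1) = true := by
  simp only [inS, Nat.unpair_pair, Bool.and_eq_true, decide_eq_true_eq, beq_iff_eq]
  exact ⟨Nat.one_pos, Nat.gcd_one_right _⟩

private def B : ℕ → ℕ := fun k => (2 * k + 2) ^ 2

private theorem pair_lt_B (t k : ℕ) (h : t ≤ k) : Nat.pair (2 * t) 1 < B k := by
  have hpb : Nat.pair (2 * t) 1 ≤ 4 * t ^ 2 + 2 * t + 1 := by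
    unfold Nat.pair
    split <;> ring_nf <;> omega
  unfold B
  nlinarith

private theorem cnt_intpoint_ge (t : ℕ) : t ≤ cnt (Nat.pair (2 * t) 1) := by
  induction t with
  | zero => exact Nat.zero_le _
  | succ t ih =>
    have hlt : Nat.pair (2 * t) 1 < Nat.pair (2 * (t + 1)) 1 := by
      exact Nat.pair_lt_pair_left 1 (by omega)
    have := cnt_lt_of hlt (inS_intpoint t)
    omega

private theorem enc0_lt_B (q : ℚ) : enc0 q < B (cnt (enc0 q)) := by
  by_contra hge
  push_neg at hge
  set k := cnt (enc0 q) with hk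
  have h1 : Nat.pair (2 * k) 1 < enc0 q := lt_of_lt_of_le (pair_lt_B k k le_rfl) hge
  have h2 : cnt (Nat.pair (2 * k) 1) < cnt (enc0 q) := cnt_lt_of h1 (inS_intpoint k)
  have h3 := cnt_intpoint_ge k
  omega

private theorem inS_enc0 (q : ℚ) : inS (enc0 q) = true :=
  (mem_range_enc0 (enc0 q)).1 ⟨q, rfl⟩

private def r : ℕ → ℕ := fun k => (List.range (B k)).findIdx (fun m => inS m && (cnt m == k))

private theorem r_eq (q : ℚ) : r (enc1 q) = enc0 q := by
  set k := enc1 q with hk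
  have hkc : k = cnt (enc0 q) := enc1_eq q
  have hex : ∃ x ∈ List.range (B k), (fun m => inS m && (cnt m == k)) x = true := by
    refine ⟨enc0 q, List.mem_range.2 (by rw [hkc]; exact enc0_lt_B q), ?_⟩
    simp [inS_enc0 q, hkc]
  have hlt := List.findIdx_lt_length_of_exists hex
  have hp := List.findIdx_getElem (w := hlt)
  rw [List.getElem_range] at hp
  simp only [Bool.and_eq_true, beq_iff_eq] at hp
  exact cnt_inj hp.1 (inS_enc0 q) (hp.2.trans hkc)

end ATaux

namespace ATaux

private theorem rat_lt_iff (q : ℚ) (n : ℕ) :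
    q < 1/2^n ↔ (q.num < 0 ∨ q.num.toNat * 2^n < q.den) := by
  rcases lt_or_ge q.num 0 with h | h
  · have hq0 : q < 0 := Rat.num_neg.1 h
    have : (0:ℚ) < 1/2^n := by positivity
    exact ⟨fun _ => Or.inl h, fun _ => lt_trans hq0 this⟩
  · have hiff : q < 1/2^n ↔ q.num.toNat * 2^n < q.den := by
      conv_lhs => rw [← Rat.num_div_den q]
      rw [div_lt_div_iff₀ (by exact_mod_cast q.pos) (by positivity : (0:ℚ) < 2^n), one_mul]
      constructor
      · intro hlt
        have hnum : (q.num : ℚ) = (q.num.toNat : ℚ) := by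
          conv_lhs => rw [← Int.toNat_of_nonneg h]
          push_cast
          ring
        rw [hnum] at hlt
        exact_mod_cast hlt
      · intro hlt
        have hnum : (q.num : ℚ) = (q.num.toNat : ℚ) := by
          conv_lhs => rw [← Int.toNat_of_nonneg h]
          push_cast
          ring
        rw [hnum]
        exact_mod_cast hlt
    constructor
    · intro hlt; exact Or.inr (hiff.1 hlt)
    · rintro (hx | hx)
      · omega
      · exact hiff.2 hx
  
private theorem primrec_iabs : Primrec iabs := by
  unfold iabs
  exact Primrec.nat_add.comp Primrec.nat_div2
    (Primrec.cond Primrec.nat_bodd (Primrec.const 1) (Primrec.const 0))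

private theorem primrec_inS : Primrec inS := by
  unfold inS
  have h1 : Primrec (fun m : ℕ => decide (0 < m.unpair.2)) :=
    (PrimrecRel.comp Primrec.nat_lt (Primrec.const 0) (Primrec.snd.comp Primrec.unpair)).decide
  have h2 : Primrec (fun m : ℕ => (Nat.gcd (iabs m.unpair.1) m.unpair.2 == 1)) :=
    Primrec.beq.comp
      (primrec_gcd.comp (primrec_iabs.comp (Primrec.fst.comp Primrec.unpair))
        (Primrec.snd.comp Primrec.unpair))
      (Primrec.const 1)
  exact Primrec.and.comp h1 h2

private theorem primrec_cnt : Primrec cnt := by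
  have hfm : Primrec (fun m : ℕ =>
      (List.range m).filterMap (fun j => Option.guard (fun j => inS j = true) j)) := by
    refine Primrec.listFilterMap Primrec.list_range ?_
    have hg : Primrec (fun w : ℕ × ℕ => if inS w.2 = true then some w.2 else none) :=
      Primrec.ite (PrimrecRel.comp Primrec.eq (primrec_inS.comp Primrec.snd) (Primrec.const true))
        (Primrec.option_some.comp Primrec.snd) (Primrec.const none)
    refine Primrec.of_eq hg fun w => ?_
    simp [Option.guard]
  have h : Primrec (fun m : ℕ =>
      ((List.range m).filterMap (fun j => Option.guard (fun j => inS j = true) j)).length) :=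
    Primrec.list_length.comp hfm
  refine h.of_eq fun m => ?_
  unfold cnt
  induction (List.range m) with
  | nil => rfl
  | cons a l ih =>
    rw [List.filterMap_cons, List.countP_cons]
    rcases hA : inS a with _ | _
    · rw [show Option.guard (fun j => inS j = true) a = none by
        simp [Option.guard, hA]]
      simp [ih, hA, List.countP_eq_length_filter]
    · rw [show Option.guard (fun j => inS j = true) a = some a by
        simp [Option.guard, hA]]
      simp [ih, hA, List.countP_eq_length_filter]

private theorem primrec_B : Primrec B := by
  unfold B
  exact primrec_pow.comp
    (Primrec.nat_add.comp (Primrec.nat_double) (Primrec.const 2)) (Primrec.const 2)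

private theorem primrec_r : Primrec r := by
  unfold r
  refine Primrec.list_findIdx (Primrec.list_range.comp primrec_B) ?_
  exact Primrec.and.comp₂
    (primrec_inS.comp₂ Primrec₂.right)
    (Primrec.beq.comp₂ (primrec_cnt.comp₂ Primrec₂.right) Primrec₂.left)


end ATaux

namespace ATaux

private def tker : ℕ × ℕ × ℕ → Bool := fun w =>
  decide (w.1 ≤ w.2.1) &&
    (w.2.2.unpair.1.bodd || decide (w.2.2.unpair.1.div2 * 2 ^ w.1 < w.2.2.unpair.2))

private theorem primrec_tker : Primrec tker := by
  unfold tker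
  have hw : Primrec (fun w : ℕ × ℕ × ℕ => w.2.2.unpair) :=
    Primrec.unpair.comp (Primrec.snd.comp Primrec.snd)
  have h1 : Primrec (fun w : ℕ × ℕ × ℕ => decide (w.1 ≤ w.2.1)) :=
    (PrimrecRel.comp Primrec.nat_le Primrec.fst (Primrec.fst.comp Primrec.snd)).decide
  have h2 : Primrec (fun w : ℕ × ℕ × ℕ => w.2.2.unpair.1.bodd) :=
    Primrec.nat_bodd.comp (Primrec.fst.comp hw)
  have h3 : Primrec (fun w : ℕ × ℕ × ℕ => decide (w.2.2.unpair.1.div2 * 2 ^ w.1 < w.2.2.unpair.2)) :=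
    (PrimrecRel.comp Primrec.nat_lt
      (Primrec.nat_mul.comp (Primrec.nat_div2.comp (Primrec.fst.comp hw))
        (primrec_pow.comp (Primrec.const 2) Primrec.fst))
      (Primrec.snd.comp hw)).decide
  exact Primrec.and.comp h1 (Primrec.or.comp h2 h3)

private theorem tker_correct (cx n : ℕ) (q : ℚ) :
    tker (n, cx, r (enc1 q)) = true ↔ (n ≤ cx ∧ q < 1/2^n) := by
  rw [r_eq q]
  unfold tker
  have hu1 : (enc0 q).unpair.1 = Encodable.encode q.num := by rw [enc0_eq, Nat.unpair_pair]
  have hu2 : (enc0 q).unpair.2 = q.den := by rw [enc0_eq, Nat.unpair_pair]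
  simp only [Bool.and_eq_true, Bool.or_eq_true, decide_eq_true_eq]
  rw [hu1, hu2, encZ_bodd, rat_lt_iff q n]
  apply and_congr Iff.rfl
  by_cases hneg : q.num < 0
  · simp [hneg]
  · have hd := encZ_div2_nonneg q.num (by omega)
    simp [hneg, hd]

end ATaux

/-- Theorem 2.4: for a computable assembly index `c` with unbounded range, a computable
pathway-probability bound `P` jointly small along high-index objects, and a set `L` of codes
emulating the universal machine with overhead `d`, for all `E, m` there is an object `y`
such that the sub-algorithmic complexity `CL L y` is attained by some code in `L`,
`CL L y + E < c y`, and `P y < 2^(-(CL L y + m))`. -/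
theorem assembly_index_deceived_in_subuniversal_space
    (c : ℕ → ℕ) (hc : Computable c) (hub : ∀ N : ℕ, ∃ x : ℕ, N ≤ c x)
    (P : ℕ → ℚ) (hP : Computable P) (hP01 : ∀ y : ℕ, 0 ≤ P y ∧ P y ≤ 1)
    (hsmall : ∀ N : ℕ, ∀ ε : ℚ, 0 < ε → ∃ x : ℕ, N ≤ c x ∧ P x < ε)
    (L : Set Nat.Partrec.Code) (d : ℕ)
    (hL : ∀ z : ℕ, ∃ e ∈ L, Outputs e z ∧ codeLen e ≤ C z + d)
    (E m : ℕ) :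
    ∃ y : ℕ, (∃ e ∈ L, Outputs e y ∧ codeLen e = CL L y) ∧
      CL L y + E < c y ∧ (P y : ℝ) < (2 : ℝ) ^ (-((CL L y + m : ℕ) : ℤ)) := by
  classical
  set K0 : ℕ := d + E + m + 1 with hK0
  -- computability of the search test
  have hF : Computable (fun x : ℕ => ATaux.r (ATaux.enc1 (P x))) :=
    (ATaux.primrec_r.to_comp).comp (Computable.encode.comp hP)
  have htest : Computable₂ (fun (e : Nat.Partrec.Code) (x : ℕ) =>
      ATaux.tker (codeLen e + K0, c x, ATaux.r (ATaux.enc1 (P x)))) := by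
    have hcdl : Computable (fun e : Nat.Partrec.Code => codeLen e + K0) :=
      (Primrec.nat_add.comp (ATaux.primrec_size.comp Primrec.encode)
        (Primrec.const K0)).to_comp
    exact (ATaux.primrec_tker.to_comp).comp
      (Computable.pair (hcdl.comp Computable.fst)
        (Computable.pair (hc.comp Computable.snd) (hF.comp Computable.snd)))
  -- the partial recursive function for the fixed point theorem
  have hf : Partrec₂ (fun (e : Nat.Partrec.Code) (_ : ℕ) =>
      Nat.rfind (fun x =>
        Part.some (ATaux.tker (codeLen e + K0, c x, ATaux.r (ATaux.enc1 (P x)))))) := by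
    apply Partrec.rfind (α := Nat.Partrec.Code × ℕ)
      (p := fun a x => Part.some (ATaux.tker (codeLen a.1 + K0, c x, ATaux.r (ATaux.enc1 (P x)))))
    exact ((htest.comp (Computable.fst.comp Computable.fst) Computable.snd).to₂).partrec₂
  obtain ⟨e₀, he₀⟩ := Nat.Partrec.Code.fixed_point₂ hf
  set n₀ : ℕ := codeLen e₀ + K0 with hn₀
  set pfun : ℕ →. Bool :=
    fun x => Part.some (ATaux.tker (n₀, c x, ATaux.r (ATaux.enc1 (P x)))) with hpfun
  -- a witness exists, so the search halts
  obtain ⟨x₀, hx₀c, hx₀P⟩ := hsmall n₀ (1/2^n₀) (by positivity)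
  have hx₀t : ATaux.tker (n₀, c x₀, ATaux.r (ATaux.enc1 (P x₀))) = true :=
    (ATaux.tker_correct (c x₀) n₀ (P x₀)).2 ⟨hx₀c, hx₀P⟩
  have hdom : (Nat.rfind pfun).Dom := by
    refine Nat.rfind_dom.2 ⟨x₀, ?_, fun {mm} _ => trivial⟩
    rw [hpfun]
    exact Part.mem_some_iff.2 hx₀t.symm
  set y : ℕ := (Nat.rfind pfun).get hdom with hy'
  have hy : y ∈ Nat.rfind pfun := Part.get_mem hdom
  have hyt : ATaux.tker (n₀, c y, ATaux.r (ATaux.enc1 (P y))) = true := by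
    have h := Nat.rfind_spec hy
    rw [hpfun] at h
    exact (Part.mem_some_iff.1 h).symm
  obtain ⟨hyc, hyP⟩ := (ATaux.tker_correct (c y) n₀ (P y)).1 hyt
  have hout : Outputs e₀ y := by
    show e₀.eval 0 = Part.some y
    rw [he₀]
    exact Part.eq_some_iff.2 hy
  -- complexity bounds
  have hCy : C y ≤ codeLen e₀ := Nat.sInf_le ⟨e₀, hout, rfl⟩
  obtain ⟨ebar, hebarL, hebarOut, hebarLen⟩ := hL y
  have hCLmem : CL L y ∈ { n | ∃ e ∈ L, Outputs e y ∧ codeLen e = n } :=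
    Nat.sInf_mem ⟨codeLen ebar, ebar, hebarL, hebarOut, rfl⟩
  have hCLle : CL L y ≤ codeLen ebar := Nat.sInf_le ⟨ebar, hebarL, hebarOut, rfl⟩
  have hCL2 : CL L y ≤ codeLen e₀ + d := by
    have := hebarLen
    omega
  refine ⟨y, hCLmem, by omega, ?_⟩
  -- probability bound
  have h1 : (P y : ℝ) < ((1/2^n₀ : ℚ) : ℝ) := Rat.cast_lt.2 hyP
  have h2 : ((1/2^n₀ : ℚ) : ℝ) = (2:ℝ) ^ (-(n₀:ℤ)) := by
    rw [zpow_neg, zpow_natCast]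
    push_cast
    ring
  have h3 : (2:ℝ) ^ (-(n₀:ℤ)) ≤ (2:ℝ) ^ (-((CL L y + m : ℕ) : ℤ)) := by
    apply zpow_le_zpow_right₀ (by norm_num : (1:ℝ) ≤ 2)
    have hle : CL L y + m ≤ n₀ := by omega
    exact neg_le_neg (Int.ofNat_le.2 hle)
  calc (P y : ℝ) < ((1/2^n₀ : ℚ) : ℝ) := h1
    _ = (2:ℝ) ^ (-(n₀:ℤ)) := h2
    _ ≤ _ := h3
end

section
/- Let c : ℕ → ℕ be computable with unbounded range, and let P : ℕ → ℚ be a computable pathway-probability bound that is jointly small along high-index objects. Then for all E, m : ℕ there exists y : ℕ such that C(y) + E < c(y) and (P(y) : ℝ) < 2^(-(C(y) + m)). (This is Corollary 2.5 of the paper: when the randomly generated computable generative processes of the assembly space are capable of universal computation, the complexity error of the assembly index exceeds any prescribed error E, and the frequency of occurrence of y diverges by a factor of at least 2^m from the pathway probability expected by Assembly Theory.) -/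
namespace AIC

open Encodable Denumerable
open Nat.Partrec (Code)
open Nat.Partrec.Code

/-- The range of the original (non-denumerable) encoding of `ℚ`. -/
abbrev S : Set ℕ := Set.range (@encode ℚ Rat.instEncodable)

noncomputable instance : DecidablePred (· ∈ S) := Encodable.decidableRangeEncode ℚ

instance : Infinite S :=
  Infinite.of_injective _ (Equiv.ofInjective _ (@encode_injective ℚ _)).injective

theorem encode0_eq (q : ℚ) :
    @encode ℚ Rat.instEncodable q = Nat.pair (Equiv.intEquivNat q.num) q.den := rfl

/-- natAbs from the int code. -/
def nA (a : ℕ) : ℕ := (a + a % 2) / 2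

theorem natA : ∀ z : ℤ, nA (Equiv.intEquivNat z) = z.natAbs := by
  intro z
  cases z with
  | ofNat m =>
      have h : Equiv.intEquivNat (Int.ofNat m) = 2 * m := rfl
      rw [h]; unfold nA; simp [Int.natAbs]
  | negSucc n =>
      have h : Equiv.intEquivNat (Int.negSucc n) = 2 * n + 1 := rfl
      rw [h]; unfold nA
      simp [Int.natAbs]
      omega

/-- common-divisor detector. -/
def CD (a b : ℕ) : ℕ := Nat.findGreatest (fun d => 2 ≤ d ∧ a % d = 0 ∧ b % d = 0) (a + b)

theorem cd_zero {a b : ℕ} (hb : 0 < b) : CD a b = 0 ↔ Nat.Coprime a b := by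
  constructor
  · intro h
    by_contra hcop
    have hg : 2 ≤ Nat.gcd a b := by
      have h0 : Nat.gcd a b ≠ 0 := Nat.ne_of_gt (Nat.gcd_pos_of_pos_right a hb)
      have h1 : Nat.gcd a b ≠ 1 := hcop
      omega
    have hle : Nat.gcd a b ≤ a + b :=
      le_trans (Nat.le_of_dvd hb (Nat.gcd_dvd_right a b)) (by omega)
    have := Nat.le_findGreatest (P := fun d => 2 ≤ d ∧ a % d = 0 ∧ b % d = 0) hle
      ⟨hg, Nat.eq_zero_of_dvd_of_lt (Nat.gcd_dvd_left a b) |> fun _ => by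
        exact Nat.mod_eq_zero_of_dvd (Nat.gcd_dvd_left a b), by
        exact Nat.mod_eq_zero_of_dvd (Nat.gcd_dvd_right a b)⟩
    rw [CD] at h; omega
  · intro hcop
    rw [CD, Nat.findGreatest_eq_zero_iff]
    rintro d hd0 hdle ⟨hd2, ha, hb'⟩
    have hda : d ∣ a := Nat.dvd_of_mod_eq_zero ha
    have hdb : d ∣ b := Nat.dvd_of_mod_eq_zero hb'
    have : d ∣ Nat.gcd a b := Nat.dvd_gcd hda hdb
    rw [hcop] at this
    have := Nat.le_of_dvd one_pos this
    omega

/-- Membership test for `S`. -/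
def chi (n : ℕ) : Bool :=
  decide (0 < n.unpair.2) && (CD (nA n.unpair.1) n.unpair.2 == 0)

theorem chi_iff (n : ℕ) : chi n = true ↔ n ∈ S := by
  constructor
  · intro h
    rw [chi, Bool.and_eq_true, decide_eq_true_eq, beq_iff_eq] at h
    obtain ⟨hpos, hcd⟩ := h
    set z : ℤ := Equiv.intEquivNat.symm n.unpair.1 with hz
    have hzn : Equiv.intEquivNat z = n.unpair.1 := Equiv.apply_symm_apply _ _
    have hna : nA n.unpair.1 = z.natAbs := by rw [← hzn, natA]
    have hcop : z.natAbs.Coprime n.unpair.2 := by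
      rw [← hna]; exact (cd_zero hpos).1 hcd
    refine ⟨⟨z, n.unpair.2, Nat.pos_iff_ne_zero.mp hpos, hcop⟩, ?_⟩
    rw [encode0_eq]
    show Nat.pair (Equiv.intEquivNat z) n.unpair.2 = n
    rw [hzn, Nat.pair_unpair]
  · rintro ⟨q, rfl⟩
    rw [encode0_eq, chi]
    simp only [Nat.unpair_pair]
    rw [natA, Bool.and_eq_true, decide_eq_true_eq, beq_iff_eq]
    exact ⟨q.pos, (cd_zero q.pos).2 q.reduced⟩

/-- count of elements of `S` below `n`. -/
def cnt (n : ℕ) : ℕ := Nat.rec 0 (fun m ih => ih + (cond (chi m) 1 0)) n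

theorem cnt_succ (n : ℕ) : cnt (n + 1) = cnt n + (cond (chi n) 1 0) := rfl

theorem cnt_eq_countP (n : ℕ) :
    cnt n = (List.range n).countP (fun y => decide (y ∈ S)) := by
  induction n with
  | zero => rfl
  | succ n ih =>
      rw [cnt_succ, List.range_succ, List.countP_append, ih]
      have : (List.countP (fun y => decide (y ∈ S)) [n]) = cond (chi n) 1 0 := by
        rcases h : chi n with _ | _
        · have : ¬ n ∈ S := fun hm => by simp [(chi_iff n).2 hm] at h
          simp [List.countP, List.countP.go, this]
        · have : n ∈ S := (chi_iff n).1 h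
          simp [List.countP, List.countP.go, this]
      rw [this]

noncomputable def sig (k : ℕ) : ℕ := (Nat.Subtype.ofNat S k : ℕ)

theorem sig_mem (k : ℕ) : sig k ∈ S := (Nat.Subtype.ofNat S k).2

theorem encodeSub_eq (x : S) :
    @encode S (Nat.Subtype.denumerable S).toEncodable x
      = (List.range (x : ℕ)).countP (fun y => decide (y ∈ S)) := rfl

theorem cnt_sig (k : ℕ) : cnt (sig k) = k := by
  letI := Nat.Subtype.denumerable S
  have h1 : Denumerable.ofNat S k = Nat.Subtype.ofNat S k := rfl
  have h2 : @encode S (Nat.Subtype.denumerable S).toEncodable (Denumerable.ofNat S k) = k :=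
    encode_ofNat k
  rw [h1, encodeSub_eq] at h2
  rw [cnt_eq_countP]
  exact h2

theorem sig_min {n k : ℕ} (hn : n < sig k) (hmem : chi n = true) : cnt n ≠ k := by
  obtain ⟨j, hj⟩ := Nat.Subtype.ofNat_surjective (s := S) ⟨n, (chi_iff n).1 hmem⟩
  have hn' : sig j = n := congrArg Subtype.val hj
  intro hcnt
  have : cnt (sig j) = k := by rw [hn']; exact hcnt
  rw [cnt_sig] at this
  subst this
  rw [hn'] at hn
  exact lt_irrefl _ hn

/-- L1: original encode of ofNat. -/
theorem encode0_ofNat (k : ℕ) :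
    @encode ℚ Rat.instEncodable (Denumerable.ofNat ℚ k) = sig k := by
  letI := Nat.Subtype.denumerable S
  have h1 : Denumerable.ofNat ℚ k = (equivRangeEncode ℚ).symm (Denumerable.ofNat S k) :=
    ofEquiv_ofNat S (equivRangeEncode ℚ) k
  have h2 : Denumerable.ofNat S k = Nat.Subtype.ofNat S k := rfl
  rw [h1, h2]
  exact congrArg Subtype.val (Equiv.apply_symm_apply (equivRangeEncode ℚ) _)

/-- the key semantic bridge -/
theorem sig_encode (q : ℚ) :
    sig (@encode ℚ Rat.instDenumerable.toEncodable q)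
      = Nat.pair (Equiv.intEquivNat q.num) q.den := by
  rw [← encode0_eq]
  rw [← encode0_ofNat (@encode ℚ Rat.instDenumerable.toEncodable q)]
  congr 1
  exact ofNat_encode q

theorem primrec_nA : Primrec nA :=
  Primrec.nat_div.comp
    (Primrec.nat_add.comp Primrec.id (Primrec.nat_mod.comp Primrec.id (Primrec.const 2)))
    (Primrec.const 2)

theorem primrec_CD : Primrec₂ CD := by
  have hp : PrimrecRel fun (p : ℕ × ℕ) (d : ℕ) => 2 ≤ d ∧ p.1 % d = 0 ∧ p.2 % d = 0 := by
    refine PrimrecPred.and ?_ (PrimrecPred.and ?_ ?_)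
    · exact Primrec.nat_le.comp (Primrec.const 2) Primrec.snd
    · exact Primrec.eq.comp (Primrec.nat_mod.comp (Primrec.fst.comp Primrec.fst) Primrec.snd)
        (Primrec.const 0)
    · exact Primrec.eq.comp (Primrec.nat_mod.comp (Primrec.snd.comp Primrec.fst) Primrec.snd)
        (Primrec.const 0)
  have := Primrec.nat_findGreatest (f := fun p : ℕ × ℕ => p.1 + p.2)
    (p := fun (p : ℕ × ℕ) (d : ℕ) => 2 ≤ d ∧ p.1 % d = 0 ∧ p.2 % d = 0)
    (Primrec.nat_add.comp Primrec.fst Primrec.snd) hp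
  exact this.to₂

theorem primrec_chi : Primrec chi := by
  have h2 : Primrec fun n : ℕ => n.unpair.2 := Primrec.snd.comp Primrec.unpair
  have h1 : Primrec fun n : ℕ => n.unpair.1 := Primrec.fst.comp Primrec.unpair
  refine Primrec.and.comp ?_ ?_
  · exact (Primrec.nat_lt.comp (Primrec.const 0) h2).decide
  · exact Primrec.beq.comp (primrec_CD.comp (primrec_nA.comp h1) h2) (Primrec.const 0)

theorem primrec_cnt : Primrec cnt := by
  have := Primrec.nat_rec' (f := fun n : ℕ => n) (g := fun _ : ℕ => (0 : ℕ))
    (h := fun (_ : ℕ) (p : ℕ × ℕ) => p.2 + (cond (chi p.1) 1 0))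
    Primrec.id (Primrec.const 0)
    ((Primrec.nat_add.comp (Primrec.snd.comp Primrec.snd)
      ((Primrec.cond (primrec_chi.comp (Primrec.fst.comp Primrec.snd))
        (Primrec.const 1) (Primrec.const 0)))).to₂)
  exact this.of_eq fun n => rfl

/-- generic: computing least witness of a computable (Bool) test. -/
theorem computable_find {t : ℕ → ℕ → Bool} (ht : Computable₂ t)
    (hex : ∀ x, ∃ y, t x y = true) :
    Computable fun x => Nat.find (hex x) := by
  have hp : Partrec₂ fun (x n : ℕ) => (Part.some (t x n) : Part Bool) := ht.partrec₂
  have hrf := Partrec.rfind hp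
  exact hrf.of_eq_tot fun x => by
    apply Nat.mem_rfind.2
    constructor
    · simpa [Part.mem_some_iff] using (Nat.find_spec (hex x)).symm
    · intro m hm
      have := Nat.find_min (hex x) hm
      simp only [Part.mem_some_iff]
      exact ((Bool.not_eq_true _).mp fun h => this h |>.elim).symm
  
theorem computable_sig : Computable sig := by
  have hex : ∀ k, ∃ n, (chi n && (cnt n == k)) = true := fun k =>
    ⟨sig k, by rw [Bool.and_eq_true, beq_iff_eq]
               exact ⟨(chi_iff _).2 (sig_mem k), cnt_sig k⟩⟩
  have ht : Computable₂ fun (k n : ℕ) => chi n && (cnt n == k) := by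
    have : Primrec₂ fun (k n : ℕ) => chi n && (cnt n == k) :=
      (Primrec.and.comp (primrec_chi.comp Primrec.snd)
        (Primrec.beq.comp (primrec_cnt.comp Primrec.snd) Primrec.fst)).to₂
    exact this.to_comp
  have := computable_find ht hex
  refine this.of_eq fun k => ?_
  refine (Nat.find_eq_iff (hex k)).2 ⟨?_, ?_⟩
  · rw [Bool.and_eq_true, beq_iff_eq]
    exact ⟨(chi_iff _).2 (sig_mem k), cnt_sig k⟩
  · intro n hn hh
    rw [Bool.and_eq_true, beq_iff_eq] at hh
    exact sig_min hn hh.1 hh.2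

/-- the numerical comparison: `q < (1/2)^x` via num/den. -/
theorem ratlt {q : ℚ} (hq : 0 ≤ q) (x : ℕ) :
    q.num.natAbs * 2 ^ x < q.den ↔ q < (1/2 : ℚ) ^ x := by
  have h2x : (0 : ℚ) < 2 ^ x := by positivity
  have hd : (0 : ℚ) < (q.den : ℚ) := by exact_mod_cast q.pos
  have hhalf : (1/2 : ℚ) ^ x = 1 / 2 ^ x := by rw [div_pow, one_pow]
  rw [hhalf, lt_div_iff₀ h2x]
  have hnum : ((q.num.natAbs : ℚ)) = (q.num : ℚ) := by
    rw [Nat.cast_natAbs, abs_of_nonneg]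
    exact_mod_cast Rat.num_nonneg.2 hq
  have hnd : (q.num : ℚ) = q * q.den := (div_eq_iff (ne_of_gt hd)).1 (Rat.num_div_den q)
  have key : (((q.num.natAbs * 2 ^ x : ℕ) : ℚ) < ((q.den : ℕ) : ℚ))
      ↔ q.num.natAbs * 2 ^ x < q.den := Nat.cast_lt
  rw [← key]
  push_cast
  rw [hnum, hnd]
  constructor
  · intro h
    have h2 : q * (q.den : ℚ) * 2 ^ x < 1 * (q.den : ℚ) := by rw [one_mul]; exact h
    have h3 : q * 2 ^ x * (q.den : ℚ) < 1 * (q.den : ℚ) := by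
      calc q * 2 ^ x * (q.den : ℚ) = q * (q.den : ℚ) * 2 ^ x := by ring
      _ < 1 * (q.den : ℚ) := h2
    exact lt_of_mul_lt_mul_right h3 (le_of_lt hd)
  · intro h
    calc q * (q.den : ℚ) * 2 ^ x = (q * 2 ^ x) * (q.den : ℚ) := by ring
    _ < 1 * (q.den : ℚ) := by exact mul_lt_mul_of_pos_right h hd
    _ = (q.den : ℚ) := one_mul _

section
variable {P : ℕ → ℚ} {c : ℕ → ℕ}

/-- the search test. -/
noncomputable def theTest (P : ℕ → ℚ) (c : ℕ → ℕ) (x y : ℕ) : Bool :=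
  decide (x ≤ c y) &&
    decide (nA (sig (@encode ℚ Rat.instDenumerable.toEncodable (P y))).unpair.1 * 2 ^ x
      < (sig (@encode ℚ Rat.instDenumerable.toEncodable (P y))).unpair.2)

theorem theTest_iff (hP0 : ∀ y, 0 ≤ P y) (x y : ℕ) :
    theTest P c x y = true ↔ (x ≤ c y ∧ P y < (1/2 : ℚ) ^ x) := by
  rw [theTest, Bool.and_eq_true, decide_eq_true_eq, decide_eq_true_eq]
  rw [sig_encode, Nat.unpair_pair]
  rw [natA, ratlt (hP0 y)]

theorem computable_theTest (hP : Computable P) (hc : Computable c) :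
    Computable₂ (theTest P c) := by
  have hg : Computable fun y : ℕ => sig (@encode ℚ Rat.instDenumerable.toEncodable (P y)) :=
    computable_sig.comp (Computable.encode.comp hP)
  have hpow : Primrec fun x : ℕ => 2 ^ x := by
    have h := Primrec₂.unpaired'.1 Nat.Primrec.pow
    exact Primrec₂.comp h (Primrec.const 2) Primrec.id
  have h1 : Computable fun p : ℕ × ℕ => decide (p.1 ≤ c p.2) :=
    (PrimrecRel.decide Primrec.nat_le).to_comp.comp Computable.fst (hc.comp Computable.snd)
  have hgp : Computable fun p : ℕ × ℕ =>
      sig (@encode ℚ Rat.instDenumerable.toEncodable (P p.2)) := hg.comp Computable.snd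
  have hA : Computable fun p : ℕ × ℕ =>
      nA (sig (@encode ℚ Rat.instDenumerable.toEncodable (P p.2))).unpair.1 * 2 ^ p.1 :=
    Primrec.nat_mul.to_comp.comp
      (primrec_nA.to_comp.comp
        ((Primrec.fst.comp Primrec.unpair).to_comp.comp hgp))
      (hpow.to_comp.comp Computable.fst)
  have hB : Computable fun p : ℕ × ℕ =>
      (sig (@encode ℚ Rat.instDenumerable.toEncodable (P p.2))).unpair.2 :=
    (Primrec.snd.comp Primrec.unpair).to_comp.comp hgp
  have h2 : Computable fun p : ℕ × ℕ =>
      decide (nA (sig (@encode ℚ Rat.instDenumerable.toEncodable (P p.2))).unpair.1 * 2 ^ p.1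
        < (sig (@encode ℚ Rat.instDenumerable.toEncodable (P p.2))).unpair.2) :=
    (PrimrecRel.decide Primrec.nat_lt).to_comp.comp hA hB
  exact (Primrec.and.to_comp.comp h1 h2).to₂

end
/-- doubling codes: small codes with huge outputs. -/
def Kc : ℕ → Code := fun j => Nat.rec Code.succ (fun _ e => Code.pair e e) j

/-- their values on input 0. -/
def v : ℕ → ℕ := fun j => Nat.rec 1 (fun _ a => Nat.pair a a) j

theorem evalK : ∀ j, (Kc j).eval 0 = Part.some (v j) := by
  intro j
  induction j with
  | zero => rfl
  | succ j ih =>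
      show (Code.pair (Kc j) (Kc j)).eval 0 = Part.some (Nat.pair (v j) (v j))
      simp [eval, ih, Seq.seq]

theorem pair_lt {a b s : ℕ} (ha : a < 2 ^ s) (hb : b < 2 ^ s) :
    Nat.pair a b < 2 ^ (2 * s) := by
  have h1 : Nat.pair a b < (max a b + 1) ^ 2 := by
    rcases Nat.lt_or_ge a b with h | h
    · rw [Nat.pair, if_pos h]
      have : max a b = b := max_eq_right (le_of_lt h)
      rw [this]; nlinarith
    · rw [Nat.pair, if_neg (not_lt.2 h)]
      have : max a b = a := max_eq_left h
      rw [this]; nlinarith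
  have h2 : (max a b + 1) ^ 2 ≤ (2 ^ s) ^ 2 := by
    have : max a b + 1 ≤ 2 ^ s := by
      rcases max_cases a b with ⟨h', _⟩ | ⟨h', _⟩ <;> omega
    exact Nat.pow_le_pow_left this 2
  calc Nat.pair a b < (max a b + 1) ^ 2 := h1
  _ ≤ (2 ^ s) ^ 2 := h2
  _ = 2 ^ (2 * s) := by rw [← Nat.pow_mul, Nat.mul_comm]

theorem encode_pair_code (cf cg : Code) :
    Encodable.encode (Code.pair cf cg)
      = 2 * (2 * Nat.pair (Encodable.encode cf) (Encodable.encode cg)) + 4 := by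
  simp [encodeCode_eq, encodeCode]

theorem encode_comp_code (cf cg : Code) :
    Encodable.encode (Code.comp cf cg)
      = 2 * (2 * Nat.pair (Encodable.encode cf) (Encodable.encode cg) + 1) + 4 := by
  simp [encodeCode_eq, encodeCode]

theorem encK : ∀ j, Encodable.encode (Kc j) < 2 ^ (4 * 2 ^ j - 3) := by
  intro j
  induction j with
  | zero =>
      show Encodable.encode Code.succ < 2 ^ 1
      simp [encodeCode_eq, encodeCode]
  | succ j ih =>
      set s := 4 * 2 ^ j - 3 with hs
      have hs1 : 1 ≤ s := by
        have : 1 ≤ 2 ^ j := Nat.one_le_two_pow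
        omega
      have hp : Nat.pair (Encodable.encode (Kc j)) (Encodable.encode (Kc j)) < 2 ^ (2 * s) :=
        pair_lt ih ih
      show Encodable.encode (Code.pair (Kc j) (Kc j)) < 2 ^ (4 * 2 ^ (j + 1) - 3)
      rw [encode_pair_code]
      have hexp : 4 * 2 ^ (j + 1) - 3 = 2 * s + 3 := by
        have : 1 ≤ 2 ^ j := Nat.one_le_two_pow
        rw [hs]
        rw [Nat.pow_succ]
        omega
      rw [hexp]
      have : 2 * (2 * Nat.pair (Encodable.encode (Kc j)) (Encodable.encode (Kc j))) + 4
          ≤ 4 * (2 ^ (2 * s) - 1) + 4 := by omega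
      calc 2 * (2 * Nat.pair (Encodable.encode (Kc j)) (Encodable.encode (Kc j))) + 4
          ≤ 4 * (2 ^ (2 * s) - 1) + 4 := this
      _ = 4 * 2 ^ (2 * s) := by
          have : 1 ≤ 2 ^ (2 * s) := Nat.one_le_two_pow
          omega
      _ < 2 ^ (2 * s + 3) := by
          rw [Nat.pow_add]
          have : (0:ℕ) < 2 ^ (2 * s) := Nat.two_pow_pos _
          omega

theorem vlow : ∀ j, 2 ^ 2 ^ j ≤ v (j + 1) := by
  intro j
  induction j with
  | zero => show 2 ^ 1 ≤ Nat.pair 1 1; rw [Nat.pair]; norm_num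
  | succ j ih =>
      show 2 ^ 2 ^ (j + 1) ≤ Nat.pair (v (j+1)) (v (j+1))
      rw [Nat.pair, if_neg (lt_irrefl _)]
      have : 2 ^ 2 ^ (j+1) = (2 ^ 2 ^ j) * (2 ^ 2 ^ j) := by
        rw [← Nat.pow_add]; congr 1; rw [Nat.pow_succ]; omega
      rw [this]
      have h2 : 2 ^ 2 ^ j * 2 ^ 2 ^ j ≤ v (j+1) * v (j+1) :=
        Nat.mul_le_mul ih ih
      omega

theorem twomul (n : ℕ) (h : 1 ≤ n) : 2 * n ≤ 2 ^ n := by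
  induction n with
  | zero => omega
  | succ n ih =>
      rcases Nat.eq_or_lt_of_le h with h' | h'
      · simp [← h']
      · have h1 : 1 ≤ n := by omega
        have := ih h1
        have h2 : (1:ℕ) ≤ 2 ^ n := Nat.one_le_two_pow
        rw [Nat.pow_succ]
        omega

end AIC

/-- Corollary 2.5: for a computable assembly index `c` with unbounded range and a computable
pathway-probability bound `P` jointly small along high-index objects (generative processes
capable of universal computation), for all `E, m` there is an object `y` with
`C y + E < c y` and `P y < 2^(-(C y + m))`. -/
theorem assembly_index_deceived_in_universal_space
    (c : ℕ → ℕ) (hc : Computable c) (hub : ∀ N : ℕ, ∃ x : ℕ, N ≤ c x)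
    (P : ℕ → ℚ) (hP : Computable P) (hP01 : ∀ y : ℕ, 0 ≤ P y ∧ P y ≤ 1)
    (hsmall : ∀ N : ℕ, ∀ ε : ℚ, 0 < ε → ∃ x : ℕ, N ≤ c x ∧ P x < ε)
    (E m : ℕ) :
    ∃ y : ℕ, C y + E < c y ∧ (P y : ℝ) < (2 : ℝ) ^ (-((C y + m : ℕ) : ℤ)) := by
  classical
  have hP0 : ∀ y, 0 ≤ P y := fun y => (hP01 y).1
  have hex : ∀ x, ∃ y, AIC.theTest P c x y = true := by
    intro x
    obtain ⟨y, hy1, hy2⟩ := hsmall x ((1/2 : ℚ) ^ x) (by positivity)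
    exact ⟨y, (AIC.theTest_iff hP0 x y).2 ⟨hy1, hy2⟩⟩
  set f : ℕ → ℕ := fun x => Nat.find (hex x) with hfdef
  have hfc : Computable f := AIC.computable_find (AIC.computable_theTest hP hc) hex
  have hNP : Nat.Partrec (f : ℕ →. ℕ) := Partrec.nat_iff.1 hfc.partrec
  obtain ⟨F, hF⟩ := Nat.Partrec.Code.exists_code.1 hNP
  set a := Nat.size (Encodable.encode F) with hadef
  set j := E + m + a + 10 with hjdef
  set y := f (AIC.v j) with hydef
  obtain ⟨hcy, hPy⟩ : AIC.v j ≤ c y ∧ P y < (1/2 : ℚ) ^ (AIC.v j) :=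
    (AIC.theTest_iff hP0 _ _).1 (Nat.find_spec (hex (AIC.v j)))
  -- the short code outputting y
  have hout : Outputs (Nat.Partrec.Code.comp F (AIC.Kc j)) y := by
    show Nat.Partrec.Code.eval (Nat.Partrec.Code.comp F (AIC.Kc j)) 0 = Part.some y
    have h1 : Nat.Partrec.Code.eval (Nat.Partrec.Code.comp F (AIC.Kc j)) 0
        = (AIC.Kc j).eval 0 >>= F.eval := rfl
    rw [h1, AIC.evalK j]
    have h2 : Part.some (AIC.v j) >>= F.eval = F.eval (AIC.v j) := Part.bind_some _ _
    rw [h2, hF]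
    rfl
  have hCy : C y ≤ codeLen (Nat.Partrec.Code.comp F (AIC.Kc j)) :=
    Nat.sInf_le ⟨_, hout, rfl⟩
  -- size bound for the code
  set s := 4 * 2 ^ j - 3 with hsdef
  have hj2 : j < 2 ^ j := Nat.lt_two_pow_self
  have hjs : j ≤ s := by omega
  have haj : a ≤ s := by omega
  have hEF : Encodable.encode F < 2 ^ s :=
    lt_of_lt_of_le (Nat.lt_size_self _) (Nat.pow_le_pow_right (by norm_num) haj)
  have hEK : Encodable.encode (AIC.Kc j) < 2 ^ s := AIC.encK j
  have hpair : Nat.pair (Encodable.encode F) (Encodable.encode (AIC.Kc j)) < 2 ^ (2 * s) :=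
    AIC.pair_lt hEF hEK
  have hlen : codeLen (Nat.Partrec.Code.comp F (AIC.Kc j)) ≤ 2 * s + 3 := by
    rw [codeLen, Nat.size_le, AIC.encode_comp_code]
    have hpos : (0:ℕ) < 2 ^ (2 * s) := Nat.two_pow_pos _
    rw [Nat.pow_add]
    omega
  -- main arithmetic estimate
  have hvlow : 2 ^ 2 ^ (j - 1) ≤ AIC.v j := by
    have : j = (j - 1) + 1 := by omega
    rw [this]
    exact AIC.vlow (j - 1)
  have hkey : 2 * s + 3 + E + m < AIC.v j := by
    have h8 : 2 * s + 3 ≤ 2 ^ (j + 3) - 3 := by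
      have : (8:ℕ) * 2 ^ j = 2 ^ (j + 3) := by rw [Nat.pow_add]; ring
      omega
    have hEm : E + m < 2 ^ (E + m) := Nat.lt_two_pow_self
    have hsum : 2 ^ (j + 3) + 2 ^ (E + m) ≤ 2 ^ (j + 4 + E + m) := by
      have e1 : 2 ^ (j + 3) ≤ 2 ^ (j + 3 + E + m) := Nat.pow_le_pow_right (by norm_num) (by omega)
      have e2 : 2 ^ (E + m) ≤ 2 ^ (j + 3 + E + m) := Nat.pow_le_pow_right (by norm_num) (by omega)
      have e3 : 2 ^ (j + 4 + E + m) = 2 ^ (j + 3 + E + m) + 2 ^ (j + 3 + E + m) := by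
        rw [show j + 4 + E + m = (j + 3 + E + m) + 1 by omega, Nat.pow_succ]; ring
      omega
    have hexp : j + 4 + E + m ≤ 2 ^ (j - 1) := by
      have hn : 1 ≤ E + m + a + 9 := by omega
      have := AIC.twomul (E + m + a + 9) hn
      have hj1 : j - 1 = E + m + a + 9 := by omega
      rw [hj1]
      omega
    have hmono : 2 ^ (j + 4 + E + m) ≤ 2 ^ 2 ^ (j - 1) :=
      Nat.pow_le_pow_right (by norm_num) hexp
    omega
  have hCm : C y + m < AIC.v j := by omega
  refine ⟨y, ?_, ?_⟩
  · -- C y + E < c y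
    omega
  · -- probability bound
    have h1 : (P y : ℝ) < (1/2 : ℝ) ^ (AIC.v j) := by
      have := hPy
      have hcast : ((P y : ℚ) : ℝ) < (((1/2 : ℚ) ^ (AIC.v j) : ℚ) : ℝ) := by
        exact_mod_cast this
      calc (P y : ℝ) < (((1/2 : ℚ) ^ (AIC.v j) : ℚ) : ℝ) := hcast
      _ = (1/2 : ℝ) ^ (AIC.v j) := by push_cast; ring
    have h2 : (1/2 : ℝ) ^ (AIC.v j) ≤ (1/2 : ℝ) ^ (C y + m) := by
      apply pow_le_pow_of_le_one (by norm_num) (by norm_num)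
      omega
    have h3 : (1/2 : ℝ) ^ (C y + m) = (2 : ℝ) ^ (-((C y + m : ℕ) : ℤ)) := by
      rw [zpow_neg, zpow_natCast]
      rw [div_pow, one_pow]
      rw [one_div]
    calc (P y : ℝ) < (1/2 : ℝ) ^ (AIC.v j) := h1
    _ ≤ (1/2 : ℝ) ^ (C y + m) := h2
    _ = (2 : ℝ) ^ (-((C y + m : ℕ) : ℤ)) := h3
end
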